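/- arXiv:2208.11719 — 3 statements merged into one kernel-verified Lean document; each statement's English description precedes it below -/
import Mathlib

section
/- Let M be as above with a perfect G-invariant pairing ⟨-,-⟩ : M ⊗ M → R(-d), satisfying ⟨F x, F y⟩ = q^d · σ(⟨x, y⟩). Let χ_1, …, χ_r be a σ-orbit of characters appearing in M such that the set {χ_1, …, χ_r} is closed under inversion (for each i there is j with χ_i^{-1} = χ_j). Then the eigenvalue μ = ∏_{i=1}^r χ_i(a) of F^r on each eigenspace M(χ_i) satisfies μ² = q^{rd}. -/
/-- The isotypic projector `π_χ = (1/n) ∑_{h ∈ G} χ(h)⁻¹ [h]` in the group algebra `R[G]`. -/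
noncomputable def isotypicProj (R : Type*) [CommRing R] (G : Type*) [CommGroup G] [Fintype G]
    [Invertible ((Fintype.card G : R))] (χ : G →* Rˣ) : MonoidAlgebra R G :=
  ⅟(Fintype.card G : R) • ∑ h : G, MonoidAlgebra.single h (((χ h)⁻¹ : Rˣ) : R)

/-- Linear extension of a character: `χ(∑ a_h [h]) = ∑ a_h χ(h)`. -/
noncomputable def chiEval {R : Type*} [CommRing R] {G : Type*} [CommGroup G]
    (χ : G →* Rˣ) (a : MonoidAlgebra R G) : R :=
  a.coeff.sum fun h c => c * ((χ h : Rˣ) : R)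

/-- The action of the group algebra `R[G]` on an `R`-module induced by an action of `G`. -/
noncomputable def gAct (R : Type*) [CommRing R] (G : Type*) [CommGroup G]
    {M : Type*} [AddCommGroup M] [Module R M] (ρ : G →* Module.End R M) :
    MonoidAlgebra R G →ₐ[R] Module.End R M :=
  MonoidAlgebra.lift R (Module.End R M) G ρ


section Aux
variable {R : Type*} [CommRing R] {G : Type*} [CommGroup G] [Fintype G]
  [Invertible ((Fintype.card G : R))]

omit [Invertible ((Fintype.card G : R))] in
lemma chiEval_single (χ : G →* Rˣ) (h : G) (c : R) :
    chiEval χ (MonoidAlgebra.single h c) = c * χ h := by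
  unfold chiEval
  rw [MonoidAlgebra.coeff_single]
  exact Finsupp.sum_single_index (by simp)

omit [Invertible ((Fintype.card G : R))] in
lemma chiEval_add (χ : G →* Rˣ) (x y : MonoidAlgebra R G) :
    chiEval χ (x + y) = chiEval χ x + chiEval χ y := by
  unfold chiEval
  rw [MonoidAlgebra.coeff_add]
  exact Finsupp.sum_add_index' (by simp) (fun h c d => add_mul c d _)

lemma single_mul_isotypicProj (χ : G →* Rˣ) (h : G) (c : R) :
    MonoidAlgebra.single h c * isotypicProj R G χ
      = (c * χ h) • isotypicProj R G χ := by
  unfold isotypicProj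
  rw [mul_smul_comm, smul_comm (c * ((χ h : Rˣ) : R)) (⅟(Fintype.card G : R))]
  congr 1
  rw [Finset.mul_sum, Finset.smul_sum]
  refine Fintype.sum_equiv (Equiv.mulLeft h) _ _ (fun k => ?_)
  rw [MonoidAlgebra.single_mul_single, MonoidAlgebra.smul_single']
  simp only [Equiv.coe_mulLeft]
  congr 1
  have : (χ h) * (χ (h * k))⁻¹ = (χ k)⁻¹ := by
    rw [map_mul, mul_inv, mul_inv_cancel_left]
  rw [mul_assoc, ← Units.val_mul, this]

lemma mul_isotypicProj (χ : G →* Rˣ) (a : MonoidAlgebra R G) :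
    a * isotypicProj R G χ = chiEval χ a • isotypicProj R G χ := by
  induction a using MonoidAlgebra.induction_linear with
  | zero => simp [chiEval]
  | add f g hf hg => rw [add_mul, hf, hg, chiEval_add, add_smul]
  | single h c => rw [single_mul_isotypicProj, chiEval_single]

end Aux

open Fin.NatCast

/-- with a perfect `G`-invariant pairing into `R(-d)` satisfying
`⟨Fx, Fy⟩ = q^d ⟨x, y⟩`, if the `σ`-orbit `χ_1, …, χ_r` of characters appearing in `M`
is closed under inversion, then the eigenvalue `μ = ∏ χ_i(a)` of `F^r` satisfies `μ² = q^{rd}`. -/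
theorem stmt_8 (R M : Type*) [Field R] [AddCommGroup M] [Module R M]
    (G : Type*) [CommGroup G] [Fintype G] [Invertible ((Fintype.card G : R))]
    (ζ : R) (hζ : IsPrimitiveRoot ζ (Fintype.card G))
    (σ : MulAut G) (ρ : G →* Module.End R M) (m : M)
    (hgen : ∀ x : M, ∃ f : MonoidAlgebra R G, x = gAct R G ρ f m)
    (F : M →ₗ[R] M) (a : MonoidAlgebra R G)
    (hFm : F m = gAct R G ρ a m)
    (hFπ : ∀ (χ : G →* Rˣ) (x : M),
      F (gAct R G ρ (isotypicProj R G χ) x)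
        = gAct R G ρ (isotypicProj R G (χ.comp σ⁻¹.toMonoidHom)) (F x))
    (q : R) (d : ℕ)
    (B : M →ₗ[R] M →ₗ[R] R) (hperf : Function.Bijective B)
    (hBG : ∀ (g : G) (x y : M), B (ρ g x) (ρ g y) = B x y)
    (hFB : ∀ x y : M, B (F x) (F y) = q ^ d * B x y)
    (r : ℕ) [NeZero r] (χ : Fin r → (G →* Rˣ))
    (horb : ∀ i : Fin r, χ (i + 1) = (χ i).comp σ⁻¹.toMonoidHom)
    (happ : ∀ i : Fin r, gAct R G ρ (isotypicProj R G (χ i)) m ≠ 0)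
    (hclosed : ∀ i : Fin r, ∃ j : Fin r, (χ i)⁻¹ = χ j)
    (hnz : ∀ i : Fin r,
      B (gAct R G ρ (isotypicProj R G (χ i)) m)
        (gAct R G ρ (isotypicProj R G ((χ i)⁻¹)) m) ≠ 0) :
    (∏ i : Fin r, chiEval (χ i) a) ^ 2 = q ^ (r * d) := by
  
  set c : Fin r → R := fun i => chiEval (χ i) a with hc
  set mm : Fin r → M := fun i => gAct R G ρ (isotypicProj R G (χ i)) m with hmm
  have key : ∀ i : Fin r, F (mm i) = c (i + 1) • mm (i + 1) := by
    intro i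
    have h1 : F (mm i) = gAct R G ρ (isotypicProj R G (χ (i + 1))) (F m) := by
      rw [hmm, hFπ (χ i) m, ← horb i]
    rw [h1, hFm]
    have h2 : gAct R G ρ (isotypicProj R G (χ (i + 1))) (gAct R G ρ a m)
        = gAct R G ρ (isotypicProj R G (χ (i + 1)) * a) m := by
      rw [map_mul]; rfl
    rw [h2, mul_comm, mul_isotypicProj, map_smul]
    rfl
  have iter : ∀ (k : ℕ) (i : Fin r),
      (F ^ k) (mm i) = (∏ j ∈ Finset.range k, c (i + 1 + (j : Fin r))) • mm (i + (k : Fin r)) := by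
    intro k
    induction k with
    | zero => intro i; simp
    | succ k ih =>
      intro i
      rw [pow_succ', Module.End.mul_apply, ih i, map_smul, key,
        Finset.prod_range_succ, smul_smul]
      congr 2
      · push_cast; congr 1; abel
      · push_cast; rw [add_assoc]
  have hmu : ∀ i : Fin r, (F ^ r) (mm i) = (∏ j : Fin r, c j) • mm i := by
    intro i
    rw [iter r i, Fin.natCast_self, add_zero]
    congr 1
    rw [← Fin.prod_univ_eq_prod_range (fun n => c (i + 1 + (n : Fin r))) r]
    refine Fintype.prod_equiv (Equiv.addLeft (i + 1)) _ _ (fun j => ?_)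
    simp [Equiv.coe_addLeft, Fin.cast_val_eq_self, add_assoc]
  have hFBk : ∀ (k : ℕ) (x y : M), B ((F ^ k) x) ((F ^ k) y) = q ^ (k * d) * B x y := by
    intro k
    induction k with
    | zero => intro x y; simp
    | succ k ih =>
      intro x y
      rw [pow_succ', Module.End.mul_apply, Module.End.mul_apply, hFB, ih,
        ← mul_assoc, ← pow_add, show d + k * d = (k + 1) * d by ring]
  obtain ⟨j, hj⟩ := hclosed 0
  have hnz0 : B (mm 0) (mm j) ≠ 0 := by
    have := hnz 0
    rwa [hj] at this
  have e1 : B ((F ^ r) (mm 0)) ((F ^ r) (mm j))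
      = (∏ i : Fin r, c i) ^ 2 * B (mm 0) (mm j) := by
    rw [hmu 0, hmu j]
    simp only [map_smul, LinearMap.smul_apply, smul_eq_mul]
    ring
  have e2 : B ((F ^ r) (mm 0)) ((F ^ r) (mm j)) = q ^ (r * d) * B (mm 0) (mm j) :=
    hFBk r (mm 0) (mm j)
  have := e1.symm.trans e2
  exact mul_right_cancel₀ hnz0 this
end

section
/- With the hypotheses of the preceding statement but without assuming the orbit is closed under inversion, one has the identity ∏_{i=1}^r χ_i(a) · ∏_{i=1}^r χ_i^{-1}(a) = q^{rd}, i.e., the product of the F^r-eigenvalues on the χ-orbit and on the χ^{-1}-orbit equals q^{rd}. -/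
lemma isotypicProj_mul_single {R : Type*} [CommRing R] {G : Type*} [CommGroup G] [Fintype G]
    [Invertible ((Fintype.card G : R))] (χ : G →* Rˣ) (g : G) (c : R) :
    isotypicProj R G χ * MonoidAlgebra.single g c
      = (c * ((χ g : Rˣ) : R)) • isotypicProj R G χ := by
  unfold isotypicProj
  rw [smul_mul_assoc, Finset.sum_mul, smul_comm]
  congr 1
  rw [Finset.smul_sum]
  apply Fintype.sum_equiv (Equiv.mulRight g)
  intro h
  rw [MonoidAlgebra.single_mul_single]
  simp only [Equiv.coe_mulRight, MonoidAlgebra.smul_single']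
  congr 1
  rw [map_mul, mul_inv]
  push_cast
  have hc : ((χ g : Rˣ) : R) * ((χ g)⁻¹ : Rˣ) = 1 := by
    rw [← Units.val_mul, mul_inv_cancel, Units.val_one]
  linear_combination (-(c * (((χ h)⁻¹ : Rˣ) : R))) * hc

lemma isotypicProj_mul {R : Type*} [CommRing R] {G : Type*} [CommGroup G] [Fintype G]
    [Invertible ((Fintype.card G : R))] (χ : G →* Rˣ) (a : MonoidAlgebra R G) :
    isotypicProj R G χ * a = chiEval χ a • isotypicProj R G χ := by
  have ha : a = a.coeff.sum fun g c => MonoidAlgebra.single g c := (MonoidAlgebra.sum_coeff_single a).symm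
  conv_lhs => rw [ha]
  rw [Finsupp.sum, Finset.mul_sum]
  unfold chiEval
  rw [Finsupp.sum, Finset.sum_smul]
  exact Finset.sum_congr rfl fun g _ => isotypicProj_mul_single χ g (a.coeff g)

lemma monoidHom_inv_comp {R : Type*} [CommRing R] {G : Type*} [CommGroup G]
    (χ : G →* Rˣ) (f : G →* G) : (χ.comp f)⁻¹ = χ⁻¹.comp f := by
  ext g; rfl

/-- without assuming the orbit is closed under inversion, the product of the
`F^r`-eigenvalues on the `χ`-orbit and on the `χ⁻¹`-orbit equals `q^{rd}`:
`∏ χ_i(a) · ∏ χ_i⁻¹(a) = q^{rd}`. -/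
theorem stmt_9 (R M : Type*) [Field R] [AddCommGroup M] [Module R M]
    (G : Type*) [CommGroup G] [Fintype G] [Invertible ((Fintype.card G : R))]
    (ζ : R) (hζ : IsPrimitiveRoot ζ (Fintype.card G))
    (σ : MulAut G) (ρ : G →* Module.End R M) (m : M)
    (hgen : ∀ x : M, ∃ f : MonoidAlgebra R G, x = gAct R G ρ f m)
    (F : M →ₗ[R] M) (a : MonoidAlgebra R G)
    (hFm : F m = gAct R G ρ a m)
    (hFπ : ∀ (χ : G →* Rˣ) (x : M),
      F (gAct R G ρ (isotypicProj R G χ) x)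
        = gAct R G ρ (isotypicProj R G (χ.comp σ⁻¹.toMonoidHom)) (F x))
    (q : R) (d : ℕ)
    (B : M →ₗ[R] M →ₗ[R] R) (hperf : Function.Bijective B)
    (hBG : ∀ (g : G) (x y : M), B (ρ g x) (ρ g y) = B x y)
    (hFB : ∀ x y : M, B (F x) (F y) = q ^ d * B x y)
    (r : ℕ) [NeZero r] (χ : Fin r → (G →* Rˣ))
    (horb : ∀ i : Fin r, χ (i + 1) = (χ i).comp σ⁻¹.toMonoidHom)
    (happ : ∀ i : Fin r, gAct R G ρ (isotypicProj R G (χ i)) m ≠ 0)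
    (hnz : ∀ i : Fin r,
      B (gAct R G ρ (isotypicProj R G (χ i)) m)
        (gAct R G ρ (isotypicProj R G ((χ i)⁻¹)) m) ≠ 0) :
    (∏ i : Fin r, chiEval (χ i) a) * (∏ i : Fin r, chiEval ((χ i)⁻¹) a)
      = q ^ (r * d) := by
  set mi : Fin r → M := fun i => gAct R G ρ (isotypicProj R G (χ i)) m with hmi
  set mi' : Fin r → M := fun i => gAct R G ρ (isotypicProj R G ((χ i)⁻¹)) m with hmi'
  set b : Fin r → R := fun i => B (mi i) (mi' i) with hb
  -- key step: F (mi i) = chiEval (χ (i+1)) a • mi (i+1)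
  have key : ∀ (ψ : Fin r → (G →* Rˣ)),
      (∀ i, ψ (i + 1) = (ψ i).comp σ⁻¹.toMonoidHom) →
      ∀ i, F (gAct R G ρ (isotypicProj R G (ψ i)) m)
        = chiEval (ψ (i + 1)) a • gAct R G ρ (isotypicProj R G (ψ (i + 1))) m := by
    intro ψ hψ i
    rw [hFπ, hFm, ← hψ i, ← Module.End.mul_apply, ← map_mul, isotypicProj_mul, map_smul,
      LinearMap.smul_apply]
  have horb' : ∀ i : Fin r, (χ (i + 1))⁻¹ = ((χ i)⁻¹).comp σ⁻¹.toMonoidHom := by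
    intro i; rw [horb i, monoidHom_inv_comp]
  have step : ∀ i : Fin r,
      chiEval (χ (i + 1)) a * chiEval ((χ (i + 1))⁻¹) a * b (i + 1) = q ^ d * b i := by
    intro i
    have h1 := key χ horb i
    have h2 := key (fun j => (χ j)⁻¹) horb' i
    have h := hFB (mi i) (mi' i)
    simp only [hmi, hmi'] at h
    rw [h1, h2] at h
    simp only [map_smul, LinearMap.smul_apply, smul_eq_mul] at h
    simp only [hb, hmi, hmi']
    rw [← h]; ring
  have hprod := Finset.prod_congr rfl fun i (_ : i ∈ Finset.univ) => step i
  have hre : ∀ f : Fin r → R, ∏ i : Fin r, f (i + 1) = ∏ i : Fin r, f i := by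
    intro f
    exact Fintype.prod_equiv (Equiv.addRight (1 : Fin r)) _ _ fun i => rfl
  rw [Finset.prod_mul_distrib, Finset.prod_mul_distrib,
    hre (fun i => chiEval (χ i) a), hre (fun i => chiEval ((χ i)⁻¹) a), hre b,
    Finset.prod_mul_distrib, Finset.prod_const, Finset.card_univ, Fintype.card_fin,
    ← pow_mul] at hprod
  have hbne : ∏ i : Fin r, b i ≠ 0 := Finset.prod_ne_zero_iff.mpr fun i _ => hnz i
  have := mul_right_cancel₀ hbne hprod
  rw [this, mul_comm d r]
end

section
/- Let W be a finite free module over the Witt ring R = W(F_p)-type base (here R = ℤ_p(μ_n) unramified), cyclic over R[G] with generator w, equipped with a σ_p-semilinear injective F with F(w) = a·w for a ∈ R[G], and a perfect pairing into R(-1) satisfying ⟨Fx, Fy⟩ = p·σ(⟨x,y⟩). Suppose χ_1, …, χ_r is a σ_p-orbit of characters appearing in W with χ_j ≠ χ_i^{-1} for all i, j, and all χ_i(a) have a common integer p-adic valuation α, all χ_i^{-1}(a) have common integer valuation β. Then α + β = 1, so exactly one of the two F^r-eigenvalues ∏χ_i(a), ∏χ_i^{-1}(a) is a p-adic unit; in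 particular not all eigenvalues of F^r have valuation r/2. -/
/-- over an unramified `p`-adic base (a DVR in which `p` is irreducible,
`p ∤ |G|`), with `W` cyclic over `R[G]`, `F` semilinear injective with `F(w) = a·w` and a
perfect pairing into `R(-1)` giving `∏ χ_i(a) · ∏ χ_i⁻¹(a) = p^r`, if all `χ_i(a)` have
common valuation `α` and all `χ_i⁻¹(a)` common valuation `β`, then `α + β = 1`; in
particular exactly one of the two `F^r`-eigenvalues is a `p`-adic unit. -/
theorem stmt_17 (p : ℕ) (hp : p.Prime)
    (R W : Type*) [CommRing R] [IsDomain R] [IsDiscreteValuationRing R]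
    (hirr : Irreducible (p : R))
    [AddCommGroup W] [Module R W]
    (G : Type*) [CommGroup G] [Fintype G] [Invertible ((Fintype.card G : R))]
    (hpn : ¬ p ∣ Fintype.card G)
    (σ : MulAut G) (ρ : G →* Module.End R W) (w : W)
    (hgen : ∀ x : W, ∃ f : MonoidAlgebra R G, x = gAct R G ρ f w)
    (F : W →ₗ[R] W) (hFinj : Function.Injective F) (a : MonoidAlgebra R G)
    (hFw : F w = gAct R G ρ a w)
    (hFπ : ∀ (χ : G →* Rˣ) (x : W),
      F (gAct R G ρ (isotypicProj R G χ) x)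
        = gAct R G ρ (isotypicProj R G (χ.comp σ⁻¹.toMonoidHom)) (F x))
    (B : W →ₗ[R] W →ₗ[R] R) (hperf : Function.Bijective B)
    (hBG : ∀ (g : G) (x y : W), B (ρ g x) (ρ g y) = B x y)
    (hFB : ∀ x y : W, B (F x) (F y) = (p : R) * B x y)
    (r : ℕ) [NeZero r] (χ : Fin r → (G →* Rˣ))
    (horb : ∀ i : Fin r, χ (i + 1) = (χ i).comp σ⁻¹.toMonoidHom)
    (happ : ∀ i : Fin r, gAct R G ρ (isotypicProj R G (χ i)) w ≠ 0)
    (hne : ∀ i j : Fin r, χ j ≠ (χ i)⁻¹)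
    (hprod : (∏ i : Fin r, chiEval (χ i) a) * (∏ i : Fin r, chiEval ((χ i)⁻¹) a)
      = (p : R) ^ r)
    (α β : ℕ)
    (hα : ∀ i : Fin r, Associated (chiEval (χ i) a) ((p : R) ^ α))
    (hβ : ∀ i : Fin r, Associated (chiEval ((χ i)⁻¹) a) ((p : R) ^ β)) :
    α + β = 1 ∧
      ((IsUnit (∏ i : Fin r, chiEval (χ i) a) ∧
          ¬ IsUnit (∏ i : Fin r, chiEval ((χ i)⁻¹) a)) ∨
        (¬ IsUnit (∏ i : Fin r, chiEval (χ i) a) ∧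
          IsUnit (∏ i : Fin r, chiEval ((χ i)⁻¹) a))) := by
  
  have hp0 : (p : R) ≠ 0 := hirr.ne_zero
  have hpu : ¬ IsUnit (p : R) := hirr.not_isUnit
  have h1 : Associated (∏ i : Fin r, chiEval (χ i) a) ((p : R) ^ (α * r)) := by
    have := Associated.prod Finset.univ (fun i => chiEval (χ i) a)
      (fun _ : Fin r => (p : R) ^ α) (fun i _ => hα i)
    simpa [Finset.prod_const, ← pow_mul] using this
  have h2 : Associated (∏ i : Fin r, chiEval ((χ i)⁻¹) a) ((p : R) ^ (β * r)) := by
    have := Associated.prod Finset.univ (fun i => chiEval ((χ i)⁻¹) a)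
      (fun _ : Fin r => (p : R) ^ β) (fun i _ => hβ i)
    simpa [Finset.prod_const, ← pow_mul] using this
  have h3 : Associated ((p : R) ^ (α * r + β * r)) ((p : R) ^ r) := by
    rw [pow_add, ← hprod]
    exact (h1.mul_mul h2).symm
  have heq : α * r + β * r = r :=
    le_antisymm ((pow_dvd_pow_iff hp0 hpu).mp h3.dvd)
      ((pow_dvd_pow_iff hp0 hpu).mp h3.symm.dvd)
  have hr0 : r ≠ 0 := NeZero.ne r
  have hab : α + β = 1 := by
    have : (α + β) * r = 1 * r := by rw [add_mul, one_mul]; exact heq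
    exact Nat.eq_of_mul_eq_mul_right (Nat.pos_of_ne_zero hr0) this
  refine ⟨hab, ?_⟩
  have hnotunit : ∀ m : ℕ, m ≠ 0 → ¬ IsUnit ((p : R) ^ m) := fun m hm hu =>
    hpu ((isUnit_pow_iff hm).mp hu)
  rcases (by omega : α = 0 ∧ β = 1 ∨ α = 1 ∧ β = 0) with ⟨ha0, hb1⟩ | ⟨ha1, hb0⟩
  · subst ha0 hb1
    left
    refine ⟨associated_one_iff_isUnit.mp (by simpa using h1),
      fun hu => hnotunit r hr0 (by simpa using h2.isUnit hu)⟩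
  · subst ha1 hb0
    right
    refine ⟨fun hu => hnotunit r hr0 (by simpa using h1.isUnit hu), ?_⟩
    exact associated_one_iff_isUnit.mp (by simpa using h2)
end
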